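/- Let w = (f,h) be a wreath cycle in S = K ≀_Γ Sym(Γ), and let a = (s,t) ∈ S. Then w^a = a^{-1}wa is a wreath cycle, and for each γ ∈ Γ, [γ, w^a]Yade = ([γ^{t^{-1}}]s)^{-1} · [γ^{t^{-1}}, w]Yade · [γ^{t^{-1}}]s. In particular, w and w^a have the same load. -/

import Mathlib

set_option linter.unusedSectionVars false

/-- The wreath product `K ≀_Γ Sym(Γ)` (with right-action conventions from the paper):
multiplication `(f,h)(e,g) = (f · e^{h⁻¹}, hg)` where `[γ](f·e^{h⁻¹}) = [γ]f * [γ^h]e`. -/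
structure Wr (K : Type*) (Γ : Type*) where
  base : Γ → K
  top : Equiv.Perm Γ

namespace Wr

variable {K Γ : Type*} [Group K]

theorem ext' {w v : Wr K Γ} (h1 : w.base = v.base) (h2 : w.top = v.top) : w = v := by
  cases w; cases v; cases h1; cases h2; rfl

instance : Group (Wr K Γ) where
  mul w v := ⟨fun γ => w.base γ * v.base (w.top γ), w.top.trans v.top⟩
  one := ⟨fun _ => 1, 1⟩
  inv w := ⟨fun γ => (w.base (w.top⁻¹ γ))⁻¹, w.top⁻¹⟩
  mul_assoc a b c := ext' (funext fun γ => mul_assoc _ _ _) (Equiv.trans_assoc _ _ _)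
  one_mul a := ext' (funext fun γ => one_mul _) (Equiv.refl_trans _)
  mul_one a := ext' (funext fun γ => mul_one _) (Equiv.trans_refl _)
  inv_mul_cancel a := ext' (funext fun γ => inv_mul_cancel _) (Equiv.symm_trans_self _)

/-- The support of a permutation, as a set. -/
def psupp (h : Equiv.Perm Γ) : Set Γ := {γ | h γ ≠ γ}

/-- The territory of a wreath product element. -/
def terr (w : Wr K Γ) : Set Γ := psupp w.top ∪ {γ | w.base γ ≠ 1}

/-- Wreath cycles: either trivial top and a singleton territory, or the top is a
single nontrivial cycle and the territory equals its support. -/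
def IsWreathCycle (w : Wr K Γ) : Prop :=
  (w.top = 1 ∧ ∃ γ₀, terr w = {γ₀}) ∨ (w.top.IsCycle ∧ terr w = psupp w.top)

/-- The yade of `w` at `γ`: the ordered product `∏_{i=0}^{|h|-1} [γ^{h^i}]f`. -/
noncomputable def yade (w : Wr K Γ) (γ : Γ) : K :=
  ((List.range (orderOf w.top)).map fun i => w.base ((w.top ^ i) γ)).prod

end Wr

open Wr

namespace WrAux

variable {K Γ : Type*} [Group K]

lemma yade_rotate (w : Wr K Γ) (γ : Γ) :
    yade w (w.top γ) = (w.base γ)⁻¹ * yade w γ * w.base γ := by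
  unfold yade
  cases hn : orderOf w.top with
  | zero => simp
  | succ m =>
    have hfun : (fun i => w.base ((w.top ^ i) (w.top γ)))
        = fun i => w.base ((w.top ^ (i + 1)) γ) := by
      funext i
      congr 1
    have hend : (w.top ^ (m + 1)) γ = γ := by
      rw [← hn, pow_orderOf_eq_one]; rfl
    have e1 : ((List.range (m + 1)).map fun i => w.base ((w.top ^ i) γ)).prod
        = w.base γ * ((List.range m).map fun i => w.base ((w.top ^ (i + 1)) γ)).prod := by
      rw [List.range_succ_eq_map, List.map_cons, List.prod_cons, List.map_map]
      simp [Function.comp_def]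
    have e2 : ((List.range (m + 1)).map fun i => w.base ((w.top ^ i) (w.top γ))).prod
        = ((List.range m).map fun i => w.base ((w.top ^ (i + 1)) γ)).prod * w.base γ := by
      rw [hfun, List.range_succ, List.map_append, List.prod_append]
      simp [hend]
    rw [e1, e2]
    group

lemma isConj_yade_pow (w : Wr K Γ) (j : ℕ) (γ : Γ) :
    IsConj (yade w γ) (yade w ((w.top ^ j) γ)) := by
  induction j generalizing γ with
  | zero =>
    rw [pow_zero, Equiv.Perm.one_apply]
  | succ m ih =>
    have h : (w.top ^ (m + 1)) γ = (w.top ^ m) (w.top γ) := by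
      rw [pow_succ]; rfl
    rw [h]
    refine IsConj.trans ?_ (ih (w.top γ))
    rw [isConj_iff]
    exact ⟨(w.base γ)⁻¹, by rw [yade_rotate]; group⟩

lemma telescope (s f : Γ → K) (h : Equiv.Perm Γ) (δ : Γ) (n : ℕ) :
    ((List.range n).map fun i => (s ((h ^ i) δ))⁻¹ * f ((h ^ i) δ) * s ((h ^ (i + 1)) δ)).prod
      = (s δ)⁻¹ * ((List.range n).map fun i => f ((h ^ i) δ)).prod * s ((h ^ n) δ) := by
  induction n with
  | zero => simp
  | succ m ih =>
    rw [List.range_succ, List.map_append, List.prod_append, List.map_append, List.prod_append, ih]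
    simp [mul_assoc]

end WrAux

open WrAux

/-- a conjugate of a wreath cycle is a wreath cycle, with
`[γ, w^a]Yade = ([γ^{t⁻¹}]s)⁻¹ · [γ^{t⁻¹},w]Yade · [γ^{t⁻¹}]s`;
in particular `w` and `w^a` have the same load. -/
theorem conj_wreathCycle {K Γ : Type*} [Group K] [Fintype Γ]
    (w : Wr K Γ) (hw : IsWreathCycle w) (a : Wr K Γ) :
    IsWreathCycle (a⁻¹ * w * a) ∧
      (∀ γ : Γ, yade (a⁻¹ * w * a) γ =
        (a.base (a.top⁻¹ γ))⁻¹ * yade w (a.top⁻¹ γ) * a.base (a.top⁻¹ γ)) ∧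
      orderOf (a⁻¹ * w * a).top = orderOf w.top ∧
      ∀ α ∈ terr w, ∀ β ∈ terr (a⁻¹ * w * a),
        IsConj (yade w α) (yade (a⁻¹ * w * a) β) := by
  set c : Wr K Γ := a⁻¹ * w * a with hc
  have hct : c.top = a.top * w.top * a.top⁻¹ := Equiv.ext fun γ => rfl
  have hcb : ∀ γ : Γ, c.base γ =
      (a.base (a.top⁻¹ γ))⁻¹ * w.base (a.top⁻¹ γ) * a.base (w.top (a.top⁻¹ γ)) :=
    fun γ => rfl
  have horder : orderOf c.top = orderOf w.top := by
    rw [hct, ← MulAut.conj_apply, MulEquiv.orderOf_eq]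
  -- yade formula
  have key : ∀ γ : Γ, yade c γ =
      (a.base (a.top⁻¹ γ))⁻¹ * yade w (a.top⁻¹ γ) * a.base (a.top⁻¹ γ) := by
    intro γ
    have hfun : (fun i => c.base ((c.top ^ i) γ)) = fun i =>
        (a.base ((w.top ^ i) (a.top⁻¹ γ)))⁻¹ * w.base ((w.top ^ i) (a.top⁻¹ γ)) *
          a.base ((w.top ^ (i + 1)) (a.top⁻¹ γ)) := by
      funext i
      have h1 : (c.top ^ i) γ = a.top ((w.top ^ i) (a.top⁻¹ γ)) := by
        rw [hct, conj_pow]; rfl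
      rw [h1, hcb]
      have h2 : a.top⁻¹ (a.top ((w.top ^ i) (a.top⁻¹ γ))) = (w.top ^ i) (a.top⁻¹ γ) :=
        Equiv.symm_apply_apply _ _
      rw [h2]
      congr 2
      rw [pow_succ']
      exact (Equiv.Perm.mul_apply _ _ _).symm
    unfold yade
    rw [horder, hfun, telescope, pow_orderOf_eq_one]
    rfl
  -- territory characterization
  have htopne : ∀ γ : Γ, (c.top γ ≠ γ ↔ w.top (a.top⁻¹ γ) ≠ a.top⁻¹ γ) := by
    intro γ
    rw [hct]
    have h1 : (a.top * w.top * a.top⁻¹) γ = a.top (w.top (a.top⁻¹ γ)) := rfl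
    have h2 : γ = a.top (a.top⁻¹ γ) := (Equiv.apply_symm_apply _ _).symm
    rw [h1]
    constructor
    · intro hne heq
      exact hne (by rw [heq, ← h2])
    · intro hne heq
      apply hne
      apply a.top.injective
      rw [heq, ← h2]
  have hterr : ∀ γ : Γ, (γ ∈ terr c ↔ a.top⁻¹ γ ∈ terr w) := by
    intro γ
    simp only [terr, psupp, Set.mem_union, Set.mem_setOf_eq]
    by_cases hm : w.top (a.top⁻¹ γ) = a.top⁻¹ γ
    · have hb : (c.base γ ≠ 1 ↔ w.base (a.top⁻¹ γ) ≠ 1) := by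
        rw [hcb, hm]
        constructor
        · intro hne heq; exact hne (by rw [heq]; group)
        · intro hne heq
          apply hne
          have := congrArg (fun x => a.base (a.top⁻¹ γ) * x * (a.base (a.top⁻¹ γ))⁻¹) heq
          simpa [mul_assoc] using this
      constructor
      · rintro (h | h)
        · exact absurd ((htopne γ).1 h) (not_not.mpr hm)
        · exact Or.inr (hb.1 h)
      · rintro (h | h)
        · exact absurd hm h
        · exact Or.inr (hb.2 h)
    · exact ⟨fun _ => Or.inl hm, fun _ => Or.inl ((htopne γ).2 hm)⟩
  refine ⟨?_, key, horder, ?_⟩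
  · rcases hw with ⟨h1, γ₀, h2⟩ | ⟨hcyc, hsup⟩
    · left
      refine ⟨by rw [hct, h1]; group, a.top γ₀, ?_⟩
      ext γ
      rw [Set.mem_singleton_iff, hterr, h2, Set.mem_singleton_iff]
      constructor
      · intro h; rw [← h, Equiv.Perm.inv_def, Equiv.apply_symm_apply]
      · intro h; rw [h, Equiv.Perm.inv_def, Equiv.symm_apply_apply]
    · right
      refine ⟨by rw [hct]; exact hcyc.conj, ?_⟩
      ext γ
      rw [hterr, hsup]
      simp only [psupp, Set.mem_setOf_eq]
      exact ((htopne γ)).symm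
  · intro α hα β hβ
    have hδβ : a.top⁻¹ β ∈ terr w := (hterr β).1 hβ
    have h1 : IsConj (yade w (a.top⁻¹ β)) (yade c β) := by
      rw [isConj_iff]
      exact ⟨(a.base (a.top⁻¹ β))⁻¹, by rw [key]; group⟩
    refine IsConj.trans ?_ h1
    rcases hw with ⟨h1', γ₀, h2⟩ | ⟨hcyc, hsup⟩
    · rw [h2, Set.mem_singleton_iff] at hα hδβ
      rw [hα, hδβ]
    · rw [hsup] at hα hδβ
      obtain ⟨i, hi⟩ := hcyc.exists_pow_eq hα hδβ
      rw [← hi]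
      exact isConj_yade_pow w i α
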